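/- arXiv:2211.07765 — 2 statements merged into one kernel-verified Lean document; each statement's English description precedes it below -/
import Mathlib

section
/- With ψ⁰ as above (KoBoL with equal coefficients, ν ∈ (0,2), ν ≠ 1), for every φ ∈ (−π/2, π/2), ψ⁰(ρ e^{iφ}) / ρ^ν → −2c·Γ(−ν)·cos(νπ/2)·e^{iνφ} as ρ → +∞. -/
set_option maxHeartbeats 1000000

open Complex Real Filter

/-- Scaling law for complex powers: positive real scalars can be pulled out. -/
lemma aux_cpow_scale (ρ : ℝ) (hρ : 0 < ρ) {z : ℂ} (hz : z ≠ 0) (w : ℂ) :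
    ((ρ : ℂ) * z) ^ w = (ρ : ℂ) ^ w * z ^ w := by
  have hρ' : (ρ : ℂ) ≠ 0 := Complex.ofReal_ne_zero.mpr hρ.ne'
  rw [Complex.cpow_def_of_ne_zero (mul_ne_zero hρ' hz), Complex.log_ofReal_mul hρ hz, add_mul,
    Complex.exp_add, ← Complex.cpow_def_of_ne_zero hz]
  congr 1
  rw [Complex.cpow_def_of_ne_zero hρ', ← Complex.ofReal_log hρ.le]

/-- Complex power of a point on the unit circle with argument in `(-π, π]`. -/
lemma aux_cpow_exp (θ : ℝ) (h1 : -π < θ) (h2 : θ ≤ π) (w : ℂ) :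
    (Complex.exp ((θ : ℂ) * Complex.I)) ^ w = Complex.exp ((θ : ℂ) * Complex.I * w) := by
  rw [Complex.cpow_def_of_ne_zero (Complex.exp_ne_zero _), Complex.log_exp (by simpa) (by simpa)]

/-- For the KoBoL exponent with equal coefficients, for every `φ ∈ (−π/2, π/2)`,
`ψ⁰(ρ e^{iφ})/ρ^ν → −2c·Γ(−ν)·cos(νπ/2)·e^{iνφ}` as `ρ → +∞`. -/
theorem stmt12 (c ν lm lp φ : ℝ) (hc : 0 < c) (hν : ν ∈ Set.Ioo (0:ℝ) 2) (hν1 : ν ≠ 1)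
    (hlm : lm < 0) (hlp : 0 < lp) (hφ : φ ∈ Set.Ioo (-(π / 2)) (π / 2)) :
    Tendsto
      (fun ρ : ℝ =>
        (((c * Real.Gamma (-ν) : ℝ) : ℂ) *
            (((-lm : ℂ) ^ (ν : ℂ)) -
              (((-lm : ℂ) - Complex.I * ((ρ : ℂ) * Complex.exp (Complex.I * (φ : ℂ)))) ^ (ν : ℂ)) +
              ((lp : ℂ) ^ (ν : ℂ)) -
              (((lp : ℂ) + Complex.I * ((ρ : ℂ) * Complex.exp (Complex.I * (φ : ℂ)))) ^ (ν : ℂ)))) /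
          ((ρ : ℂ) ^ (ν : ℂ)))
      atTop
      (nhds ((((-2 * c * Real.Gamma (-ν) * Real.cos (ν * π / 2) : ℝ)) : ℂ) *
        Complex.exp (Complex.I * (ν : ℂ) * (φ : ℂ)))) := by
  obtain ⟨hν0, hν2⟩ := hν
  obtain ⟨hφ1, hφ2⟩ := hφ
  have hcos : 0 < Real.cos φ := Real.cos_pos_of_mem_Ioo ⟨by linarith, hφ2⟩
  set e : ℂ := Complex.exp (Complex.I * (φ : ℂ)) with he
  have heI : e = Complex.exp ((φ : ℂ) * Complex.I) := by rw [he, mul_comm]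
  have hie_im : (Complex.I * e).im = Real.cos φ := by
    simp [heI, Complex.exp_mul_I, Complex.cos_ofReal_im, Complex.cos_ofReal_re]
  -- the two limit directions
  have hzm : ∀ x : ℝ, ((x : ℂ) - Complex.I * e) ≠ 0 := by
    intro x h
    have : ((x : ℂ) - Complex.I * e).im = -Real.cos φ := by
      simp [Complex.sub_im, hie_im]
    rw [h] at this
    simp at this
    linarith
  have hzp : ∀ x : ℝ, ((x : ℂ) + Complex.I * e) ≠ 0 := by
    intro x h
    have : ((x : ℂ) + Complex.I * e).im = Real.cos φ := by
      simp [Complex.add_im, hie_im]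
    rw [h] at this
    simp at this
    linarith
  -- tendsto of x/ρ to 0 in ℂ
  have hdiv : ∀ a : ℝ, Tendsto (fun ρ : ℝ => ((a : ℂ) / (ρ : ℂ))) atTop (nhds 0) := by
    intro a
    have h1 : Tendsto (fun ρ : ℝ => a / ρ) atTop (nhds 0) :=
      tendsto_const_nhds.div_atTop tendsto_id
    have h2 := (Complex.continuous_ofReal.tendsto 0).comp h1
    simpa [Function.comp_def, Complex.ofReal_div] using h2
  -- tendsto of (ρ^ν)⁻¹ to 0 in ℂ
  have hinv : Tendsto (fun ρ : ℝ => (((ρ : ℂ) ^ (ν : ℂ))⁻¹)) atTop (nhds 0) := by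
    rw [tendsto_zero_iff_norm_tendsto_zero]
    have heq : ∀ᶠ ρ : ℝ in atTop, ‖(((ρ : ℂ) ^ (ν : ℂ))⁻¹)‖ = (ρ ^ ν)⁻¹ := by
      filter_upwards [eventually_gt_atTop (0:ℝ)] with ρ hρ
      rw [norm_inv, Complex.norm_cpow_eq_rpow_re_of_pos hρ]
      norm_num
    have h2 : Tendsto (fun ρ : ℝ => (ρ ^ ν)⁻¹) atTop (nhds 0) :=
      (tendsto_rpow_atTop hν0).inv_tendsto_atTop
    exact h2.congr' (heq.mono fun x hx => hx.symm)
  -- continuity of cpow at the limit points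
  have hcontm : ContinuousAt (fun z : ℂ => z ^ (ν : ℂ)) ((0:ℂ) - Complex.I * e) := by
    apply continuousAt_cpow_const
    rw [Complex.mem_slitPlane_iff]
    right
    simp [Complex.sub_im, hie_im]
    positivity
  have hcontp : ContinuousAt (fun z : ℂ => z ^ (ν : ℂ)) ((0:ℂ) + Complex.I * e) := by
    apply continuousAt_cpow_const
    rw [Complex.mem_slitPlane_iff]
    right
    simp [Complex.add_im, hie_im]
    positivity
  have hdivm : Tendsto (fun ρ : ℝ => ((-lm : ℂ) / (ρ:ℂ))) atTop (nhds 0) := by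
    have := hdiv (-lm); push_cast at this; exact this
  have Hm : Tendsto (fun ρ : ℝ => (((-lm : ℂ)) / ρ - Complex.I * e) ^ (ν : ℂ)) atTop
      (nhds (((0:ℂ) - Complex.I * e) ^ (ν : ℂ))) := by
    exact hcontm.tendsto.comp (hdivm.sub tendsto_const_nhds)
  have Hp : Tendsto (fun ρ : ℝ => (((lp : ℂ)) / ρ + Complex.I * e) ^ (ν : ℂ)) atTop
      (nhds (((0:ℂ) + Complex.I * e) ^ (ν : ℂ))) := by
    exact hcontp.tendsto.comp ((hdiv lp).add tendsto_const_nhds)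
  set A : ℂ := ((c * Real.Gamma (-ν) : ℝ) : ℂ) with hA
  -- the main combined limit
  have Hmain : Tendsto
      (fun ρ : ℝ => A * ((-lm : ℂ) ^ (ν : ℂ) * ((ρ : ℂ) ^ (ν : ℂ))⁻¹
          - (((-lm : ℂ)) / ρ - Complex.I * e) ^ (ν : ℂ)
          + (lp : ℂ) ^ (ν : ℂ) * ((ρ : ℂ) ^ (ν : ℂ))⁻¹
          - (((lp : ℂ)) / ρ + Complex.I * e) ^ (ν : ℂ))) atTop
      (nhds (A * ((-lm : ℂ) ^ (ν : ℂ) * 0 - ((0:ℂ) - Complex.I * e) ^ (ν : ℂ)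
          + (lp : ℂ) ^ (ν : ℂ) * 0 - ((0:ℂ) + Complex.I * e) ^ (ν : ℂ)))) :=
    tendsto_const_nhds.mul ((((tendsto_const_nhds.mul hinv).sub Hm).add
      (tendsto_const_nhds.mul hinv)).sub Hp)
  -- eventual equality with the original function
  have heqF : ∀ᶠ ρ : ℝ in atTop,
      A * ((-lm : ℂ) ^ (ν : ℂ) * ((ρ : ℂ) ^ (ν : ℂ))⁻¹
          - (((-lm : ℂ)) / ρ - Complex.I * e) ^ (ν : ℂ)
          + (lp : ℂ) ^ (ν : ℂ) * ((ρ : ℂ) ^ (ν : ℂ))⁻¹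
          - (((lp : ℂ)) / ρ + Complex.I * e) ^ (ν : ℂ))
        = (A * (((-lm : ℂ) ^ (ν : ℂ)) -
              (((-lm : ℂ) - Complex.I * ((ρ : ℂ) * e)) ^ (ν : ℂ)) +
              ((lp : ℂ) ^ (ν : ℂ)) -
              (((lp : ℂ) + Complex.I * ((ρ : ℂ) * e)) ^ (ν : ℂ)))) / ((ρ : ℂ) ^ (ν : ℂ)) := by
    filter_upwards [eventually_gt_atTop (0:ℝ)] with ρ hρ
    have hρ' : (ρ : ℂ) ≠ 0 := Complex.ofReal_ne_zero.mpr hρ.ne'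
    have hρν : ((ρ : ℂ) ^ (ν : ℂ)) ≠ 0 := by
      rw [Complex.cpow_def_of_ne_zero hρ']
      exact Complex.exp_ne_zero _
    have h1 : ((-lm : ℂ) - Complex.I * ((ρ : ℂ) * e)) = (ρ : ℂ) * (((-lm : ℂ)) / ρ - Complex.I * e) := by
      field_simp

    have h2 : ((lp : ℂ) + Complex.I * ((ρ : ℂ) * e)) = (ρ : ℂ) * (((lp : ℂ)) / ρ + Complex.I * e) := by
      field_simp

    have hz1 : ((-lm : ℂ)) / ρ - Complex.I * e ≠ 0 := by
      have := hzm (-lm / ρ); push_cast at this; exact this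
    have hz2 : ((lp : ℂ)) / ρ + Complex.I * e ≠ 0 := by
      have := hzp (lp / ρ); push_cast at this; exact this
    rw [h1, h2, aux_cpow_scale ρ hρ hz1, aux_cpow_scale ρ hρ hz2]
    field_simp
  have Hmain2 := Hmain.congr' heqF
  convert Hmain2 using 2
  have hIp : Complex.exp (((π/2 : ℝ) : ℂ) * Complex.I) = Complex.I := by
    rw [Complex.exp_mul_I, ← Complex.ofReal_cos, ← Complex.ofReal_sin,
      Real.cos_pi_div_two, Real.sin_pi_div_two]
    simp
  have hIm : Complex.exp (((-(π/2) : ℝ) : ℂ) * Complex.I) = -Complex.I := by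
    rw [Complex.exp_mul_I, ← Complex.ofReal_cos, ← Complex.ofReal_sin,
      Real.cos_neg, Real.sin_neg, Real.cos_pi_div_two, Real.sin_pi_div_two]
    simp
  have hmθ : -(Complex.I * e) = Complex.exp (((φ - π/2 : ℝ) : ℂ) * Complex.I) := by
    rw [show ((φ - π/2 : ℝ) : ℂ) * Complex.I
        = ((φ : ℝ) : ℂ) * Complex.I + ((-(π/2) : ℝ) : ℂ) * Complex.I by push_cast; ring,
      Complex.exp_add, hIm, heI]
    ring
  have hpθ : Complex.I * e = Complex.exp (((φ + π/2 : ℝ) : ℂ) * Complex.I) := by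
    rw [show ((φ + π/2 : ℝ) : ℂ) * Complex.I
        = ((φ : ℝ) : ℂ) * Complex.I + ((π/2 : ℝ) : ℂ) * Complex.I by push_cast; ring,
      Complex.exp_add, hIp, heI]
    ring
  have hpi : 0 < π := Real.pi_pos
  have hm := aux_cpow_exp (φ - π/2) (by linarith) (by linarith) (ν : ℂ)
  have hp := aux_cpow_exp (φ + π/2) (by linarith) (by linarith) (ν : ℂ)
  rw [show (0:ℂ) - Complex.I * e = -(Complex.I * e) from zero_sub _,
    show (0:ℂ) + Complex.I * e = Complex.I * e from zero_add _, hmθ, hpθ, hm, hp]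
  have key : Complex.exp (((φ - π/2 : ℝ) : ℂ) * Complex.I * (ν : ℂ))
      + Complex.exp (((φ + π/2 : ℝ) : ℂ) * Complex.I * (ν : ℂ))
      = 2 * ((Real.cos (ν * π / 2) : ℝ) : ℂ) * Complex.exp (Complex.I * (ν : ℂ) * (φ : ℂ)) := by
    rw [Complex.ofReal_cos, Complex.two_cos, add_mul, ← Complex.exp_add, ← Complex.exp_add,
      show ((ν * π / 2 : ℝ) : ℂ) * Complex.I + Complex.I * (ν : ℂ) * (φ : ℂ)
        = ((φ + π/2 : ℝ) : ℂ) * Complex.I * (ν : ℂ) by push_cast; ring,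
      show -((ν * π / 2 : ℝ) : ℂ) * Complex.I + Complex.I * (ν : ℂ) * (φ : ℂ)
        = ((φ - π/2 : ℝ) : ℂ) * Complex.I * (ν : ℂ) by push_cast; ring]
    ring
  have hcoef : (((-2 * c * Real.Gamma (-ν) * Real.cos (ν * π / 2) : ℝ)) : ℂ)
      = A * (-2 * ((Real.cos (ν * π / 2) : ℝ) : ℂ)) := by
    rw [hA]; push_cast; ring
  rw [hcoef]
  linear_combination A * key
end

section
/- Let X be a Lévy process with two-sided exponential moment: E[e^{λX_1}] < ∞ for λ ∈ (λ₋', λ₊') with λ₋' < 0 < λ₊'. Then the running supremum at an independent exponential time X̄_{T_q} has finite exponential moments E[e^{λ X̄_{T_q}}] < ∞ for 0 ≤ λ < λ₊' sufficiently small relative to q, and the Wiener–Hopf factor φ_q^+(ξ) = E[e^{iξ X̄_{T_q}}] extends continuously to {Im ξ ≥ −λ} and analytically to {Im ξ > −λ}. -/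
open MeasureTheory ProbabilityTheory Complex
open scoped ENNReal

namespace WH

noncomputable def g (lam : ℝ) : ℝ → ℝ≥0∞ := fun x => ENNReal.ofReal (Real.exp (lam * x))

lemma g_meas (lam : ℝ) : Measurable (g lam) :=
  ENNReal.measurable_ofReal.comp (Real.measurable_exp.comp (measurable_id.const_mul lam))

variable {Ω : Type*} [MeasurableSpace Ω] {μ : Measure Ω} [IsProbabilityMeasure μ]

/-- moment at time t -/
noncomputable def mfun (μ : Measure Ω) (X : ℝ → Ω → ℝ) (lam t : ℝ) : ℝ≥0∞ :=
  ∫⁻ ω, g lam (X t ω) ∂μ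

lemma mfun_zero (X : ℝ → Ω → ℝ) (hX0 : ∀ ω, X 0 ω = 0) (lam : ℝ) :
    mfun μ X lam 0 = 1 := by
  simp [mfun, g, hX0]

lemma lintegral_diff_eq (X : ℝ → Ω → ℝ) (hXmeas : ∀ t, Measurable (X t))
    (hstat : ∀ s t : ℝ, 0 ≤ s → s ≤ t →
      Measure.map (fun ω => X t ω - X s ω) μ = Measure.map (fun ω => X (t - s) ω) μ)
    (lam : ℝ) {s t : ℝ} (hs : 0 ≤ s) (hst : s ≤ t) :
    ∫⁻ ω, g lam (X t ω - X s ω) ∂μ = mfun μ X lam (t - s) := by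
  have h1 : ∫⁻ ω, g lam (X t ω - X s ω) ∂μ
      = ∫⁻ x, g lam x ∂(Measure.map (fun ω => X t ω - X s ω) μ) :=
    (lintegral_map (g_meas lam) ((hXmeas t).sub (hXmeas s))).symm
  rw [h1, hstat s t hs hst, lintegral_map (g_meas lam) (hXmeas _)]
  rfl

lemma mfun_add (X : ℝ → Ω → ℝ) (hX0 : ∀ ω, X 0 ω = 0) (hXmeas : ∀ t, Measurable (X t))
    (hindep : ∀ (n : ℕ) (t : Fin (n + 1) → ℝ), Monotone t → (∀ i, 0 ≤ t i) →
      iIndepFun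
        (fun i : Fin n => fun ω => X (t i.succ) ω - X (t i.castSucc) ω) μ)
    (hstat : ∀ s t : ℝ, 0 ≤ s → s ≤ t →
      Measure.map (fun ω => X t ω - X s ω) μ = Measure.map (fun ω => X (t - s) ω) μ)
    (lam : ℝ) {s t : ℝ} (hs : 0 ≤ s) (ht : 0 ≤ t) :
    mfun μ X lam (s + t) = mfun μ X lam s * mfun μ X lam t := by
  set tt : Fin 3 → ℝ := ![0, s, s + t] with htt
  have hmono : Monotone tt := by
    intro i j hij
    fin_cases i <;> fin_cases j <;>
      simp_all [tt] <;> linarith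
  have hpos : ∀ i, 0 ≤ tt i := by
    intro i; fin_cases i <;> simp [tt] <;> linarith
  have hI := hindep 2 tt hmono hpos
  have hpair : IndepFun (fun ω => X (tt (0:Fin 2).succ) ω - X (tt (0:Fin 2).castSucc) ω)
      (fun ω => X (tt (1:Fin 2).succ) ω - X (tt (1:Fin 2).castSucc) ω) μ :=
    hI.indepFun (by decide)
  have h01 : tt (0:Fin 2).castSucc = 0 := rfl
  have h0s : tt (0:Fin 2).succ = s := rfl
  have h1s : tt (1:Fin 2).castSucc = s := rfl
  have h1t : tt (1:Fin 2).succ = s + t := rfl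
  rw [h01, h0s, h1s, h1t] at hpair
  have hpair' : IndepFun (fun ω => g lam (X s ω - X 0 ω))
      (fun ω => g lam (X (s + t) ω - X s ω)) μ :=
    hpair.comp (g_meas lam) (g_meas lam)
  have hmul := lintegral_mul_eq_lintegral_mul_lintegral_of_indepFun
    ((g_meas lam).comp ((hXmeas s).sub (hXmeas 0)))
    ((g_meas lam).comp ((hXmeas (s+t)).sub (hXmeas s))) hpair'
  simp only [Function.comp_def, Pi.mul_apply, Pi.sub_apply] at hmul
  have hL : ∫⁻ ω, g lam (X s ω - X 0 ω) * g lam (X (s + t) ω - X s ω) ∂μ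
      = mfun μ X lam (s + t) := by
    refine lintegral_congr fun ω => ?_
    simp only [g, hX0, sub_zero]
    rw [← ENNReal.ofReal_mul (Real.exp_nonneg _), ← Real.exp_add]
    ring_nf
  have h2 : ∫⁻ ω, g lam (X s ω - X 0 ω) ∂μ = mfun μ X lam s := by
    refine lintegral_congr fun ω => ?_
    simp [hX0]
  have h3 : ∫⁻ ω, g lam (X (s + t) ω - X s ω) ∂μ = mfun μ X lam t := by
    rw [lintegral_diff_eq X hXmeas hstat lam hs (by linarith)]
    simp
  rw [hL, h2, h3] at hmul
  exact hmul

lemma mfun_nsmul (X : ℝ → Ω → ℝ) (hX0 : ∀ ω, X 0 ω = 0) (hXmeas : ∀ t, Measurable (X t))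
    (hindep : ∀ (n : ℕ) (t : Fin (n + 1) → ℝ), Monotone t → (∀ i, 0 ≤ t i) →
      iIndepFun
        (fun i : Fin n => fun ω => X (t i.succ) ω - X (t i.castSucc) ω) μ)
    (hstat : ∀ s t : ℝ, 0 ≤ s → s ≤ t →
      Measure.map (fun ω => X t ω - X s ω) μ = Measure.map (fun ω => X (t - s) ω) μ)
    (lam : ℝ) {u : ℝ} (hu : 0 ≤ u) (k : ℕ) :
    mfun μ X lam (k * u) = (mfun μ X lam u) ^ k := by
  induction k with
  | zero => simpa using mfun_zero X hX0 lam
  | succ k ih =>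
      have : ((k + 1 : ℕ) : ℝ) * u = (k : ℕ) * u + u := by push_cast; ring
      rw [this, mfun_add X hX0 hXmeas hindep hstat lam (by positivity) hu, ih, pow_succ]

lemma mfun_rat (X : ℝ → Ω → ℝ) (hX0 : ∀ ω, X 0 ω = 0) (hXmeas : ∀ t, Measurable (X t))
    (hindep : ∀ (n : ℕ) (t : Fin (n + 1) → ℝ), Monotone t → (∀ i, 0 ≤ t i) →
      iIndepFun
        (fun i : Fin n => fun ω => X (t i.succ) ω - X (t i.castSucc) ω) μ)
    (hstat : ∀ s t : ℝ, 0 ≤ s → s ≤ t →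
      Measure.map (fun ω => X t ω - X s ω) μ = Measure.map (fun ω => X (t - s) ω) μ)
    (lam : ℝ) (hc0 : mfun μ X lam 1 ≠ 0) (hctop : mfun μ X lam 1 ≠ ∞)
    {r : ℚ} (hr : 0 ≤ r) :
    mfun μ X lam (r : ℝ) = (mfun μ X lam 1) ^ (r : ℝ) := by
  set c := mfun μ X lam 1 with hc
  set b : ℕ := r.den with hbdef
  set a : ℕ := r.num.toNat with hadef
  have hb : 0 < b := r.pos
  have hbne : (b : ℝ) ≠ 0 := Nat.cast_ne_zero.mpr hb.ne'
  have hanum : (a : ℤ) = r.num := Int.toNat_of_nonneg (Rat.num_nonneg.mpr hr)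
  have hnum : ((a : ℕ) : ℝ) = (r.num : ℝ) := by exact_mod_cast congrArg (fun z : ℤ => (z : ℝ)) hanum
  have hrab : (r : ℝ) = (a : ℝ) / (b : ℝ) := by
    rw [Rat.cast_def, ← hnum, hbdef]
  set y := mfun μ X lam ((b : ℝ)⁻¹) with hy
  have h1 : y ^ b = c := by
    rw [hy, ← mfun_nsmul X hX0 hXmeas hindep hstat lam (by positivity) b,
      mul_inv_cancel₀ hbne]
  have hytop : y ≠ ∞ := by
    intro h
    rw [h, ENNReal.top_pow hb.ne'] at h1
    exact hctop h1.symm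
  have hyval : y = c ^ ((b : ℝ)⁻¹) := by
    rw [← h1, ← ENNReal.rpow_natCast y b, ← ENNReal.rpow_mul,
      mul_inv_cancel₀ hbne, ENNReal.rpow_one]
  have h2 : mfun μ X lam (r : ℝ) = y ^ a := by
    rw [hrab, div_eq_mul_inv, ← mfun_nsmul X hX0 hXmeas hindep hstat lam (by positivity) a]
  rw [h2, hyval, ← ENNReal.rpow_natCast _ a, ← ENNReal.rpow_mul, hrab]
  ring_nf

lemma grid_bound (X : ℝ → Ω → ℝ) (hX0 : ∀ ω, X 0 ω = 0) (hXmeas : ∀ t, Measurable (X t))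
    (hindep : ∀ (n : ℕ) (t : Fin (n + 1) → ℝ), Monotone t → (∀ i, 0 ≤ t i) →
      iIndepFun
        (fun i : Fin n => fun ω => X (t i.succ) ω - X (t i.castSucc) ω) μ)
    (lam : ℝ) (hlam : 0 < lam) (b bi : ℝ) (hb : 0 < b)
    (k : ℕ) (s : Fin k → ℝ) (hmono : Monotone s) (hpos : ∀ i, 0 ≤ s i)
    (hlow : ∀ i j : Fin k, i ≤ j →
        ENNReal.ofReal b ≤ ∫⁻ ω, g lam (X (s j) ω - X (s i) ω) ∂μ)
    (hup : ∀ i : Fin k, (∫⁻ ω, g lam (X (s i) ω) ∂μ) ≤ ENNReal.ofReal bi)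
    (α : ℝ) :
    μ {ω | ∃ i, α < X (s i) ω} ≤ ENNReal.ofReal (bi / b * Real.exp (-(lam * α))) := by
  classical
  rcases Nat.eq_zero_or_pos k with hk | hk
  · subst hk
    have : {ω | ∃ i : Fin 0, α < X (s i) ω} = ∅ := by
      ext ω; simp [Fin.isEmpty']
    simp [this]
  obtain ⟨K, rfl⟩ : ∃ K, k = K + 1 := ⟨k - 1, (Nat.succ_pred_eq_of_pos hk).symm⟩
  set tt : Fin (K + 2) → ℝ := Fin.cases 0 s with htt
  have htt0 : tt 0 = 0 := rfl
  have htts : ∀ j : Fin (K + 1), tt j.succ = s j := fun j => by simp [htt]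
  have httmono : Monotone tt := by
    intro u v huv
    induction u using Fin.cases with
    | zero =>
        induction v using Fin.cases with
        | zero => exact le_rfl
        | succ j => rw [htt0, htts]; exact hpos j
    | succ i =>
        induction v using Fin.cases with
        | zero =>
            exact absurd (Fin.le_zero_iff.mp huv) (Fin.succ_ne_zero i)
        | succ j =>
            rw [htts, htts]; exact hmono (Fin.succ_le_succ_iff.mp huv)
  have htpos : ∀ i, 0 ≤ tt i := by
    intro i
    induction i using Fin.cases with
    | zero => exact le_of_eq htt0.symm
    | succ j => rw [htts]; exact hpos j
  have hincI := hindep (K + 1) tt httmono htpos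
  set inc : Fin (K + 1) → Ω → ℝ := fun i ω => X (tt i.succ) ω - X (tt i.castSucc) ω with hinc
  have hincmeas : ∀ i, Measurable (inc i) := fun i => (hXmeas _).sub (hXmeas _)
  have hXsum : ∀ (j : Fin (K + 1)) (ω : Ω),
      X (s j) ω = ∑ m ∈ Finset.univ.filter (· ≤ j), inc m ω := by
    intro j
    induction j using Fin.induction with
    | zero =>
        intro ω
        have hfil : Finset.univ.filter (· ≤ (0 : Fin (K + 1))) = {0} := by
          ext m; simp [Fin.le_zero_iff]
        rw [hfil, Finset.sum_singleton]
        have : inc 0 ω = X (s 0) ω - X 0 ω := by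
          simp only [hinc]
          rw [htts 0]
          congr 2
        rw [this, hX0, sub_zero]
    | succ i ih =>
        intro ω
        have hfil : Finset.univ.filter (· ≤ i.succ)
            = insert i.succ (Finset.univ.filter (· ≤ i.castSucc)) := by
          ext m
          simp only [Finset.mem_filter, Finset.mem_univ, true_and, Finset.mem_insert]
          constructor
          · intro h
            rcases eq_or_lt_of_le h with h' | h'
            · exact Or.inl h'
            · exact Or.inr (Fin.le_castSucc_iff.mpr h')
          · rintro (rfl | h)
            · exact le_rfl
            · exact le_of_lt (Fin.le_castSucc_iff.mp h)
        have hnotmem : i.succ ∉ Finset.univ.filter (· ≤ i.castSucc) := by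
          simp only [Finset.mem_filter, Finset.mem_univ, true_and]
          exact not_le.mpr Fin.castSucc_lt_succ
        rw [hfil, Finset.sum_insert hnotmem, ← ih ω]
        have : inc i.succ ω = X (s i.succ) ω - X (s i.castSucc) ω := by
          simp only [hinc]
          rw [htts i.succ, ← Fin.succ_castSucc, htts i.castSucc]
        rw [this]
        ring
  set A : Fin (K + 1) → Set Ω :=
    fun i => {ω | (∀ j, j < i → X (s j) ω ≤ α) ∧ α < X (s i) ω} with hA
  have hAmeas : ∀ i, MeasurableSet (A i) := by
    intro i
    have : A i = (⋂ j, ⋂ (_ : j < i), {ω | X (s j) ω ≤ α}) ∩ {ω | α < X (s i) ω} := by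
      ext ω; simp [hA]
    rw [this]
    exact (MeasurableSet.iInter fun j => MeasurableSet.iInter fun _ =>
        measurableSet_le (hXmeas _) measurable_const).inter
      (measurableSet_lt measurable_const (hXmeas _))
  have hAdisj : Pairwise (Function.onFun Disjoint A) := by
    intro i j hij
    wlog h : i < j generalizing i j
    · exact (this hij.symm (hij.symm.lt_or_gt.resolve_right h)).symm
    rw [Function.onFun, Set.disjoint_left]
    rintro ω ⟨h1, h2⟩ ⟨h3, h4⟩
    exact absurd (h3 i h) (not_le.mpr h2)
  have hunion : {ω | ∃ i, α < X (s i) ω} = ⋃ i, A i := by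
    ext ω
    simp only [Set.mem_setOf_eq, Set.mem_iUnion]
    constructor
    · rintro ⟨i, hi⟩
      have hne : (Finset.univ.filter fun j => α < X (s j) ω).Nonempty :=
        ⟨i, by simp [hi]⟩
      set i0 := (Finset.univ.filter fun j => α < X (s j) ω).min' hne with hi0
      have hmem := (Finset.univ.filter fun j => α < X (s j) ω).min'_mem hne
      rw [Finset.mem_filter] at hmem
      refine ⟨i0, fun j hj => ?_, hmem.2⟩
      by_contra hcon
      push_neg at hcon
      have : i0 ≤ j := Finset.min'_le _ j (by simp [hcon])
      exact absurd hj (not_lt.mpr this)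
    · rintro ⟨i, hi⟩; exact ⟨i, hi.2⟩
  have key : ∀ i : Fin (K + 1),
      ENNReal.ofReal (Real.exp (lam * α) * b) * μ (A i)
        ≤ ∫⁻ ω in A i, g lam (X (s (Fin.last K)) ω) ∂μ := by
    intro i
    set S : Finset (Fin (K + 1)) := Finset.univ.filter (· ≤ i) with hS
    set Tb : Finset (Fin (K + 1)) := Finset.univ.filter (fun m => ¬ m ≤ i) with hT
    have hST : Disjoint S Tb := by
      rw [Finset.disjoint_left]
      intro m hmS hmT
      rw [hS, Finset.mem_filter] at hmS
      rw [hT, Finset.mem_filter] at hmT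
      exact hmT.2 hmS.2
    have hblocks := hincI.indepFun_finset S Tb hST hincmeas
    set ps : (S → ℝ) → Fin (K + 1) → ℝ :=
      fun v j => ∑ m : S, if (m : Fin (K + 1)) ≤ j then v m else 0 with hps
    have hpsmeas : ∀ j, Measurable fun v : (S → ℝ) => ps v j := by
      intro j
      apply Finset.measurable_sum
      intro m _
      by_cases h : (m : Fin (K + 1)) ≤ j
      · simpa [h] using measurable_pi_apply m
      · simpa [h] using (measurable_const : Measurable fun _ : (S → ℝ) => (0 : ℝ))
    set G : (S → ℝ) → ℝ≥0∞ := fun v =>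
      Set.indicator {v | (∀ j, j < i → ps v j ≤ α) ∧ α < ps v i}
        (fun v => g lam (ps v i)) v with hG
    set H : (Tb → ℝ) → ℝ≥0∞ := fun v => g lam (∑ m : Tb, v m) with hH
    have hGmeas : Measurable G := by
      apply Measurable.indicator ((g_meas lam).comp (hpsmeas i))
      have : {v : S → ℝ | (∀ j, j < i → ps v j ≤ α) ∧ α < ps v i}
          = (⋂ j, ⋂ (_ : j < i), {v | ps v j ≤ α}) ∩ {v | α < ps v i} := by
        ext v; simp
      rw [this]
      exact (MeasurableSet.iInter fun j => MeasurableSet.iInter fun _ =>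
          measurableSet_le (hpsmeas j) measurable_const).inter
        (measurableSet_lt measurable_const (hpsmeas i))
    have hHmeas : Measurable H :=
      (g_meas lam).comp (Finset.measurable_sum _ fun m _ => measurable_pi_apply m)
    have hps_eq : ∀ (ω : Ω) (j : Fin (K + 1)), j ≤ i →
        ps (fun m : S => inc m ω) j = X (s j) ω := by
      intro ω j hj
      have hcoe : ps (fun m : S => inc m ω) j
          = ∑ m ∈ S, (fun x => if x ≤ j then inc x ω else 0) m :=
        Finset.sum_coe_sort S (fun x => if x ≤ j then inc x ω else 0)
      rw [hXsum j ω, hcoe, ← Finset.sum_filter]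
      congr 1
      ext m
      rw [hS]
      simp only [Finset.mem_filter, Finset.mem_univ, true_and]
      exact ⟨fun h => h.2, fun h => ⟨le_trans h hj, h⟩⟩
    have hsumT : ∀ ω : Ω, (∑ m : Tb, inc m ω) = X (s (Fin.last K)) ω - X (s i) ω := by
      intro ω
      have h1 : X (s (Fin.last K)) ω = ∑ m ∈ Finset.univ, inc m ω := by
        rw [hXsum (Fin.last K) ω]
        congr 1
        ext m; simp [Fin.le_last]
      have h2 : X (s i) ω = ∑ m ∈ S, inc m ω := by
        rw [hXsum i ω, hS]
      have h3 := Finset.sum_filter_add_sum_filter_not Finset.univ (· ≤ i) (fun m => inc m ω)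
      rw [Finset.sum_coe_sort Tb (fun m => inc m ω), hT]
      rw [← hS] at h3
      rw [h1, h2]
      rw [← h3]
      ring
    have hGL : ∀ ω, G (fun m : S => inc m ω)
        = Set.indicator (A i) (fun ω => g lam (X (s i) ω)) ω := by
      intro ω
      by_cases hmem : ω ∈ A i
      · have hv : (fun m : S => inc m ω) ∈
            {v : S → ℝ | (∀ j, j < i → ps v j ≤ α) ∧ α < ps v i} := by
          constructor
          · intro j hj
            rw [hps_eq ω j hj.le]
            exact hmem.1 j hj
          · rw [hps_eq ω i le_rfl]
            exact hmem.2
        rw [Set.indicator_of_mem hmem]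
        have hGv : G (fun m : S => inc m ω)
            = g lam (ps (fun m : S => inc m ω) i) := Set.indicator_of_mem hv _
        rw [hGv, hps_eq ω i le_rfl]
      · have hv : (fun m : S => inc m ω) ∉
            {v : S → ℝ | (∀ j, j < i → ps v j ≤ α) ∧ α < ps v i} := by
          intro hv
          apply hmem
          constructor
          · intro j hj
            have := hv.1 j hj
            rwa [hps_eq ω j hj.le] at this
          · have := hv.2
            rwa [hps_eq ω i le_rfl] at this
        rw [Set.indicator_of_notMem hmem]
        exact Set.indicator_of_notMem hv _
    have hRH : ∀ ω, H (fun m : Tb => inc m ω)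
        = g lam (X (s (Fin.last K)) ω - X (s i) ω) := by
      intro ω
      have : H (fun m : Tb => inc m ω) = g lam (∑ m : Tb, inc m ω) := rfl
      rw [this, hsumT ω]
    have hindLR : IndepFun (fun ω => G (fun m : S => inc m ω))
        (fun ω => H (fun m : Tb => inc m ω)) μ := hblocks.comp hGmeas hHmeas
    have hindLR' : IndepFun (Set.indicator (A i) (fun ω => g lam (X (s i) ω)))
        (fun ω => g lam (X (s (Fin.last K)) ω - X (s i) ω)) μ := by
      have e1 : (fun ω => G (fun m : S => inc m ω))
          = Set.indicator (A i) (fun ω => g lam (X (s i) ω)) := funext hGL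
      have e2 : (fun ω => H (fun m : Tb => inc m ω))
          = fun ω => g lam (X (s (Fin.last K)) ω - X (s i) ω) := funext hRH
      rwa [e1, e2] at hindLR
    have hLmeas : Measurable (Set.indicator (A i) fun ω => g lam (X (s i) ω)) :=
      (((g_meas lam).comp (hXmeas _)).indicator (hAmeas i))
    have hRmeas : Measurable (fun ω => g lam (X (s (Fin.last K)) ω - X (s i) ω)) :=
      (g_meas lam).comp ((hXmeas _).sub (hXmeas _))
    have hprod := lintegral_mul_eq_lintegral_mul_lintegral_of_indepFun hLmeas hRmeas hindLR'
    simp only [Pi.mul_apply] at hprod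
    have hsplit : ∀ ω, (Set.indicator (A i) (fun ω => g lam (X (s i) ω)) ω)
          * g lam (X (s (Fin.last K)) ω - X (s i) ω)
        = Set.indicator (A i) (fun ω => g lam (X (s (Fin.last K)) ω)) ω := by
      intro ω
      by_cases h : ω ∈ A i
      · rw [Set.indicator_of_mem h, Set.indicator_of_mem h]
        simp only [g]
        rw [← ENNReal.ofReal_mul (Real.exp_nonneg _), ← Real.exp_add]
        ring_nf
      · rw [Set.indicator_of_notMem h, Set.indicator_of_notMem h, zero_mul]
    calc ENNReal.ofReal (Real.exp (lam * α) * b) * μ (A i)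
        = (ENNReal.ofReal (Real.exp (lam * α)) * μ (A i)) * ENNReal.ofReal b := by
          rw [ENNReal.ofReal_mul (Real.exp_nonneg _)]; ring
      _ ≤ (∫⁻ ω, Set.indicator (A i) (fun ω => g lam (X (s i) ω)) ω ∂μ)
            * ∫⁻ ω, g lam (X (s (Fin.last K)) ω - X (s i) ω) ∂μ := by
          apply mul_le_mul'
          · rw [← lintegral_indicator_const (hAmeas i) (ENNReal.ofReal (Real.exp (lam * α)))]
            apply lintegral_mono
            intro ω
            by_cases h : ω ∈ A i
            · rw [Set.indicator_of_mem h, Set.indicator_of_mem h]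
              apply ENNReal.ofReal_le_ofReal
              apply Real.exp_le_exp.mpr
              exact mul_le_mul_of_nonneg_left (le_of_lt h.2) hlam.le
            · rw [Set.indicator_of_notMem h, Set.indicator_of_notMem h]
          · exact hlow i (Fin.last K) (Fin.le_last i)
      _ = ∫⁻ ω, Set.indicator (A i) (fun ω => g lam (X (s i) ω)) ω
            * g lam (X (s (Fin.last K)) ω - X (s i) ω) ∂μ := hprod.symm
      _ = ∫⁻ ω, Set.indicator (A i) (fun ω => g lam (X (s (Fin.last K)) ω)) ω ∂μ := by
          exact lintegral_congr hsplit
      _ = ∫⁻ ω in A i, g lam (X (s (Fin.last K)) ω) ∂μ :=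
          lintegral_indicator (hAmeas i) _
  have hsum : ENNReal.ofReal (Real.exp (lam * α) * b) * μ {ω | ∃ i, α < X (s i) ω}
      ≤ ENNReal.ofReal bi := by
    rw [hunion, measure_iUnion hAdisj hAmeas]
    calc ENNReal.ofReal (Real.exp (lam * α) * b) * ∑' i, μ (A i)
        = ∑' i, ENNReal.ofReal (Real.exp (lam * α) * b) * μ (A i) :=
          ENNReal.tsum_mul_left.symm
      _ ≤ ∑' i, ∫⁻ ω in A i, g lam (X (s (Fin.last K)) ω) ∂μ :=
          ENNReal.tsum_le_tsum key
      _ = ∫⁻ ω in ⋃ i, A i, g lam (X (s (Fin.last K)) ω) ∂μ :=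
          (lintegral_iUnion hAmeas hAdisj _).symm
      _ ≤ ∫⁻ ω, g lam (X (s (Fin.last K)) ω) ∂μ := setLIntegral_le_lintegral _ _
      _ ≤ ENNReal.ofReal bi := hup _
  have hpos' : 0 < Real.exp (lam * α) * b := by positivity
  have hsum2 : μ {ω | ∃ i, α < X (s i) ω} * ENNReal.ofReal (Real.exp (lam * α) * b)
      ≤ ENNReal.ofReal bi := by
    rw [mul_comm]; exact hsum
  have h := (ENNReal.le_div_iff_mul_le
      (Or.inl (ENNReal.ofReal_pos.mpr hpos').ne')
      (Or.inl ENNReal.ofReal_ne_top)).mpr hsum2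
  calc μ {ω | ∃ i, α < X (s i) ω}
      ≤ ENNReal.ofReal bi / ENNReal.ofReal (Real.exp (lam * α) * b) := h
    _ = ENNReal.ofReal (bi / (Real.exp (lam * α) * b)) :=
        (ENNReal.ofReal_div_of_pos hpos').symm
    _ = ENNReal.ofReal (bi / b * Real.exp (-(lam * α))) := by
        rw [Real.exp_neg, mul_comm (Real.exp (lam * α)) b, ← div_div,
          div_eq_mul_inv (bi / b)]

lemma rationalSup_bound (X : ℝ → Ω → ℝ) (hX0 : ∀ ω, X 0 ω = 0)
    (hXmeas : ∀ t, Measurable (X t))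
    (hindep : ∀ (n : ℕ) (t : Fin (n + 1) → ℝ), Monotone t → (∀ i, 0 ≤ t i) →
      iIndepFun
        (fun i : Fin n => fun ω => X (t i.succ) ω - X (t i.castSucc) ω) μ)
    (hstat : ∀ s t : ℝ, 0 ≤ s → s ≤ t →
      Measure.map (fun ω => X t ω - X s ω) μ = Measure.map (fun ω => X (t - s) ω) μ)
    (lam : ℝ) (hlam : 0 < lam) (n : ℕ) (b bi : ℝ) (hb : 0 < b)
    (hmlow : ∀ u : ℚ, 0 ≤ u → u ≤ (n : ℚ) → ENNReal.ofReal b ≤ mfun μ X lam (u : ℝ))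
    (hmup : ∀ u : ℚ, 0 ≤ u → u ≤ (n : ℚ) → mfun μ X lam (u : ℝ) ≤ ENNReal.ofReal bi)
    (α : ℝ) :
    μ {ω | ∃ u : ℚ, 0 ≤ u ∧ u ≤ (n : ℚ) ∧ α < X (u : ℝ) ω}
      ≤ ENNReal.ofReal (bi / b * Real.exp (-(lam * α))) := by
  classical
  obtain ⟨e, hesurj⟩ : ∃ e : ℕ → ℚ, Function.Surjective e :=
    ⟨_, (Denumerable.eqv ℚ).symm.surjective⟩
  set D : ℕ → Set Ω :=
    fun N => {ω | ∃ m, m < N ∧ 0 ≤ e m ∧ e m ≤ (n : ℚ) ∧ α < X ((e m : ℚ) : ℝ) ω} with hD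
  have hDmono : Monotone D := by
    intro N N' hNN ω hω
    obtain ⟨m, hm, h1, h2, h3⟩ := hω
    exact ⟨m, lt_of_lt_of_le hm hNN, h1, h2, h3⟩
  have hDunion : {ω | ∃ u : ℚ, 0 ≤ u ∧ u ≤ (n : ℚ) ∧ α < X (u : ℝ) ω} = ⋃ N, D N := by
    ext ω
    simp only [Set.mem_setOf_eq, Set.mem_iUnion]
    constructor
    · rintro ⟨u, h1, h2, h3⟩
      obtain ⟨m, rfl⟩ := hesurj u
      exact ⟨m + 1, m, Nat.lt_succ_self _, h1, h2, h3⟩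
    · rintro ⟨N, m, _, h1, h2, h3⟩
      exact ⟨e m, h1, h2, h3⟩
  rw [hDunion, hDmono.directed_le.measure_iUnion]
  apply iSup_le
  intro N
  set F : Finset ℚ :=
    ((Finset.range N).image e).filter (fun u => 0 ≤ u ∧ u ≤ (n : ℚ)) with hF
  set k := F.card with hk
  set sfun : Fin k → ℝ := fun i => ((F.orderIsoOfFin rfl i : ℚ) : ℝ) with hsfun
  have hmemF : ∀ i : Fin k, (F.orderIsoOfFin rfl i : ℚ) ∈ F := fun i =>
    (F.orderIsoOfFin rfl i).2
  have hmemF' : ∀ u ∈ F, 0 ≤ u ∧ u ≤ (n : ℚ) := by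
    intro u hu
    rw [hF, Finset.mem_filter] at hu
    exact hu.2
  have hFprop : ∀ i : Fin k, 0 ≤ (F.orderIsoOfFin rfl i : ℚ)
      ∧ (F.orderIsoOfFin rfl i : ℚ) ≤ (n : ℚ) := fun i => hmemF' _ (hmemF i)
  have hsmono : Monotone sfun := by
    intro i j hij
    have h : ((F.orderIsoOfFin rfl i : ℚ)) ≤ (F.orderIsoOfFin rfl j : ℚ) :=
      (F.orderIsoOfFin rfl).monotone hij
    simp only [hsfun]
    exact_mod_cast h
  have hspos : ∀ i, 0 ≤ sfun i := by
    intro i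
    have h := (hFprop i).1
    simp only [hsfun]
    exact_mod_cast h
  have hgrid := grid_bound X hX0 hXmeas hindep lam hlam b bi hb k sfun hsmono hspos
    (fun i j hij => by
      have h0i : (0 : ℝ) ≤ sfun i := hspos i
      have hij' : sfun i ≤ sfun j := hsmono hij
      rw [lintegral_diff_eq X hXmeas hstat lam h0i hij']
      have hdiff : sfun j - sfun i
          = (((F.orderIsoOfFin rfl j : ℚ) - (F.orderIsoOfFin rfl i : ℚ) : ℚ) : ℝ) := by
        simp only [hsfun]; push_cast; ring
      rw [hdiff]
      apply hmlow
      · rw [sub_nonneg]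
        have := hij'
        simp only [hsfun] at this
        exact_mod_cast this
      · have h1 := (hFprop j).2
        have h2 := (hFprop i).1
        linarith)
    (fun i => by
      have : (∫⁻ ω, g lam (X (sfun i) ω) ∂μ) = mfun μ X lam (sfun i) := rfl
      rw [this]
      exact hmup _ (hFprop i).1 (hFprop i).2)
    α
  refine le_trans (measure_mono ?_) hgrid
  intro ω hω
  obtain ⟨m, hm, h1, h2, h3⟩ := hω
  have huF : e m ∈ F := by
    rw [hF, Finset.mem_filter]
    exact ⟨Finset.mem_image_of_mem e (Finset.mem_range.mpr hm), h1, h2⟩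
  obtain ⟨i, hi⟩ := (F.orderIsoOfFin rfl).surjective ⟨e m, huF⟩
  refine ⟨i, ?_⟩
  have : sfun i = ((e m : ℚ) : ℝ) := by
    simp only [hsfun]
    rw [hi]
  rw [this]
  exact h3

lemma tail_bound (X : ℝ → Ω → ℝ) (T : Ω → ℝ)
    (hcadlag : ∀ ω t, ContinuousWithinAt (fun s => X s ω) (Set.Ici t) t)
    (hT0 : ∀ ω, 0 ≤ T ω)
    (hTindep : IndepFun T (fun ω => (fun t => X t ω : ℝ → ℝ)) μ)
    (q lam : ℝ) (hq : 0 < q) (hlam : 0 < lam)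
    (hTlaw : ∀ s : ℝ, 0 ≤ s → μ {ω | s < T ω} = ENNReal.ofReal (Real.exp (-q * s)))
    (hpath : ∀ (n : ℕ) (α : ℝ),
      μ {ω | ∃ u : ℚ, 0 ≤ u ∧ u ≤ (n : ℚ) ∧ α < X (u : ℝ) ω}
        ≤ ENNReal.ofReal (Real.exp (q * n / 2) * Real.exp (-(lam * α))))
    (α : ℝ) :
    μ {ω | α < sSup ((fun s => X s ω) '' Set.Icc 0 (T ω))}
      ≤ (ENNReal.ofReal (Real.exp (3 * q / 2))
          * (1 - ENNReal.ofReal (Real.exp (-(q / 2))))⁻¹)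
        * ENNReal.ofReal (Real.exp (-(lam * α))) := by
  classical
  set Sn : ℕ → Set (ℝ → ℝ) :=
    fun m => {f | ∃ u : ℚ, 0 ≤ u ∧ u ≤ (m : ℚ) ∧ α < f (u : ℝ)} with hSn
  have hSnmeas : ∀ m, MeasurableSet (Sn m) := by
    intro m
    have : Sn m = ⋃ (u : ℚ), ⋃ (_ : 0 ≤ u ∧ u ≤ (m : ℚ)), {f : ℝ → ℝ | α < f (u : ℝ)} := by
      ext f; simp [hSn]; tauto
    rw [this]
    exact MeasurableSet.iUnion fun u => MeasurableSet.iUnion fun _ =>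
      measurableSet_lt measurable_const (measurable_pi_apply _)
  have hcover : {ω | α < sSup ((fun s => X s ω) '' Set.Icc 0 (T ω))}
      ⊆ ⋃ n : ℕ, (T ⁻¹' Set.Ico (n : ℝ) ((n : ℝ) + 1)
          ∩ (fun ω => (fun t => X t ω : ℝ → ℝ)) ⁻¹' Sn (n + 1)) := by
    intro ω hω
    simp only [Set.mem_setOf_eq] at hω
    have hne : ((fun s => X s ω) '' Set.Icc 0 (T ω)).Nonempty :=
      ⟨X 0 ω, Set.mem_image_of_mem _ (Set.mem_Icc.mpr ⟨le_rfl, hT0 ω⟩)⟩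
    obtain ⟨x, hx, hαx⟩ := exists_lt_of_lt_csSup hne hω
    obtain ⟨s, hs, rfl⟩ := hx
    set n : ℕ := ⌊T ω⌋₊ with hn
    have hTn : (n : ℝ) ≤ T ω := Nat.floor_le (hT0 ω)
    have hTn1 : T ω < (n : ℝ) + 1 := Nat.lt_floor_add_one _
    have hs0 : 0 ≤ s := hs.1
    have hsn : s < (n : ℝ) + 1 := lt_of_le_of_lt hs.2 hTn1
    have ev1 : ∀ᶠ v in nhdsWithin s (Set.Ici s), α < X v ω :=
      (hcadlag ω s).eventually (eventually_gt_nhds hαx)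
    have ev2 : ∀ᶠ v in nhdsWithin s (Set.Ici s), v < (n : ℝ) + 1 :=
      Filter.Eventually.filter_mono nhdsWithin_le_nhds (eventually_lt_nhds hsn)
    obtain ⟨U, hUmem, hUsub⟩ := Filter.eventually_iff_exists_mem.mp (ev1.and ev2)
    obtain ⟨V, hVnhds, hVsub⟩ := mem_nhdsWithin_iff_exists_mem_nhds_inter.mp hUmem
    obtain ⟨δ, hδ, hball⟩ := Metric.mem_nhds_iff.mp hVnhds
    obtain ⟨u, hu1, hu2⟩ := exists_rat_btwn (lt_add_of_pos_right s hδ)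
    have huU : (u : ℝ) ∈ U := by
      apply hVsub
      constructor
      · apply hball
        rw [Metric.mem_ball, Real.dist_eq, abs_of_pos (by linarith)]
        linarith
      · exact Set.mem_Ici.mpr hu1.le
    have hu := hUsub _ huU
    refine Set.mem_iUnion.mpr ⟨n, ⟨Set.mem_Ico.mpr ⟨hTn, hTn1⟩, ?_⟩⟩
    refine ⟨u, ?_, ?_, hu.1⟩
    · exact_mod_cast le_trans hs0 hu1.le
    · have : (u : ℝ) ≤ ((n + 1 : ℕ) : ℝ) := by push_cast; linarith [hu.2]
      exact_mod_cast this
  have hTbound : ∀ n : ℕ, μ (T ⁻¹' Set.Ico (n : ℝ) ((n : ℝ) + 1))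
      ≤ ENNReal.ofReal (Real.exp (-q * ((n : ℝ) - 1))) := by
    intro n
    cases n with
    | zero =>
        refine le_trans prob_le_one ?_
        rw [ENNReal.one_le_ofReal]
        rw [Real.one_le_exp_iff]
        push_cast
        linarith
    | succ m =>
        have hsub : T ⁻¹' Set.Ico ((m + 1 : ℕ) : ℝ) (((m + 1 : ℕ) : ℝ) + 1)
            ⊆ {ω | ((m + 1 : ℕ) : ℝ) - 1 < T ω} := by
          intro ω hω
          have := (Set.mem_Ico.mp hω).1
          simp only [Set.mem_setOf_eq]
          linarith
        refine le_trans (measure_mono hsub) ?_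
        rw [hTlaw (((m + 1 : ℕ) : ℝ) - 1) (by push_cast; linarith)]
  calc μ {ω | α < sSup ((fun s => X s ω) '' Set.Icc 0 (T ω))}
      ≤ ∑' n : ℕ, μ (T ⁻¹' Set.Ico (n : ℝ) ((n : ℝ) + 1)
          ∩ (fun ω => (fun t => X t ω : ℝ → ℝ)) ⁻¹' Sn (n + 1)) :=
        le_trans (measure_mono hcover) (measure_iUnion_le _)
    _ ≤ ∑' n : ℕ, (ENNReal.ofReal (Real.exp (3 * q / 2))
          * ENNReal.ofReal (Real.exp (-(lam * α))))
          * (ENNReal.ofReal (Real.exp (-(q / 2)))) ^ n := by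
        apply ENNReal.tsum_le_tsum
        intro n
        rw [hTindep.measure_inter_preimage_eq_mul _ _ measurableSet_Ico (hSnmeas (n + 1))]
        have hpre : (fun ω => (fun t => X t ω : ℝ → ℝ)) ⁻¹' Sn (n + 1)
            = {ω | ∃ u : ℚ, 0 ≤ u ∧ u ≤ ((n + 1 : ℕ) : ℚ) ∧ α < X (u : ℝ) ω} := by
          ext ω; simp [hSn]
        rw [hpre]
        refine le_trans (mul_le_mul' (hTbound n) (hpath (n + 1) α)) ?_
        rw [← ENNReal.ofReal_mul (Real.exp_nonneg _)]
        rw [← ENNReal.ofReal_pow (Real.exp_nonneg _), ← ENNReal.ofReal_mul (by positivity),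
          ← ENNReal.ofReal_mul (by positivity)]
        apply ENNReal.ofReal_le_ofReal
        rw [← Real.exp_nat_mul, ← Real.exp_add, ← Real.exp_add, ← Real.exp_add, ← Real.exp_add]
        apply le_of_eq
        congr 1
        push_cast
        ring
    _ = (ENNReal.ofReal (Real.exp (3 * q / 2)) * ENNReal.ofReal (Real.exp (-(lam * α))))
          * (1 - ENNReal.ofReal (Real.exp (-(q / 2))))⁻¹ := by
        rw [ENNReal.tsum_mul_left, ENNReal.tsum_geometric]
    _ = (ENNReal.ofReal (Real.exp (3 * q / 2))
          * (1 - ENNReal.ofReal (Real.exp (-(q / 2))))⁻¹)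
        * ENNReal.ofReal (Real.exp (-(lam * α))) := by ring

lemma integrable_of_tail (M : Ω → ℝ) (hM : Measurable M) (hM0 : ∀ ω, 0 ≤ M ω)
    (lam l : ℝ) (hl0 : 0 ≤ l) (hllam : l < lam) (K : ℝ≥0∞) (hK : K ≠ ∞)
    (htail : ∀ α : ℝ, μ {ω | α < M ω} ≤ K * ENNReal.ofReal (Real.exp (-(lam * α)))) :
    Integrable (fun ω => Real.exp (l * M ω)) μ := by
  have hfm : Measurable fun ω => Real.exp (l * M ω) :=
    Real.measurable_exp.comp (hM.const_mul l)
  refine ⟨hfm.aestronglyMeasurable, ?_⟩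
  rw [hasFiniteIntegral_iff_ofReal (Filter.Eventually.of_forall fun ω => Real.exp_nonneg _)]
  set A : ℕ → Set Ω := fun j => M ⁻¹' Set.Ico (j : ℝ) ((j : ℝ) + 1) with hA
  have hAmeas : ∀ j, MeasurableSet (A j) := fun j => hM measurableSet_Ico
  have hAdisj : Pairwise (Function.onFun Disjoint A) := by
    intro i j hij
    rw [Function.onFun, Set.disjoint_left]
    intro ω h1 h2
    rw [hA, Set.mem_preimage, Set.mem_Ico] at h1 h2
    rcases hij.lt_or_gt with h | h
    · have : (i : ℝ) + 1 ≤ (j : ℝ) := by exact_mod_cast h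
      linarith [h1.2, h2.1]
    · have : (j : ℝ) + 1 ≤ (i : ℝ) := by exact_mod_cast h
      linarith [h1.1, h2.2]
  have hAunion : (⋃ j, A j) = Set.univ := by
    ext ω
    simp only [Set.mem_iUnion, Set.mem_univ, iff_true]
    refine ⟨⌊M ω⌋₊, ?_⟩
    rw [hA, Set.mem_preimage, Set.mem_Ico]
    exact ⟨Nat.floor_le (hM0 ω), Nat.lt_floor_add_one _⟩
  have hsplit : ∫⁻ ω, ENNReal.ofReal (Real.exp (l * M ω)) ∂μ
      = ∑' j, ∫⁻ ω in A j, ENNReal.ofReal (Real.exp (l * M ω)) ∂μ := by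
    rw [← lintegral_iUnion hAmeas hAdisj, hAunion, setLIntegral_univ]
  rw [hsplit]
  have hterm : ∀ j : ℕ, ∫⁻ ω in A j, ENNReal.ofReal (Real.exp (l * M ω)) ∂μ
      ≤ (K * ENNReal.ofReal (Real.exp (l + lam)))
        * (ENNReal.ofReal (Real.exp (l - lam))) ^ j := by
    intro j
    have h1 : ∫⁻ ω in A j, ENNReal.ofReal (Real.exp (l * M ω)) ∂μ
        ≤ ∫⁻ _ in A j, ENNReal.ofReal (Real.exp (l * ((j : ℝ) + 1))) ∂μ := by
      apply setLIntegral_mono measurable_const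
      intro ω hω
      rw [hA, Set.mem_preimage, Set.mem_Ico] at hω
      exact ENNReal.ofReal_le_ofReal (Real.exp_le_exp.mpr
        (mul_le_mul_of_nonneg_left hω.2.le hl0))
    rw [setLIntegral_const] at h1
    have h2 : μ (A j) ≤ K * ENNReal.ofReal (Real.exp (-(lam * ((j : ℝ) - 1)))) := by
      refine le_trans (measure_mono ?_) (htail ((j : ℝ) - 1))
      intro ω hω
      rw [hA, Set.mem_preimage, Set.mem_Ico] at hω
      simp only [Set.mem_setOf_eq]
      linarith [hω.1]
    calc ∫⁻ ω in A j, ENNReal.ofReal (Real.exp (l * M ω)) ∂μ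
        ≤ ENNReal.ofReal (Real.exp (l * ((j : ℝ) + 1)))
            * (K * ENNReal.ofReal (Real.exp (-(lam * ((j : ℝ) - 1))))) :=
          le_trans h1 (mul_le_mul_right h2 _)
      _ = K * (ENNReal.ofReal (Real.exp (l * ((j : ℝ) + 1)))
            * ENNReal.ofReal (Real.exp (-(lam * ((j : ℝ) - 1))))) := by ring
      _ ≤ (K * ENNReal.ofReal (Real.exp (l + lam)))
            * (ENNReal.ofReal (Real.exp (l - lam))) ^ j := by
          rw [mul_assoc]
          apply mul_le_mul_right
          rw [← ENNReal.ofReal_mul (Real.exp_nonneg _), ← ENNReal.ofReal_pow (Real.exp_nonneg _),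
            ← ENNReal.ofReal_mul (Real.exp_nonneg _), ← Real.exp_add, ← Real.exp_nat_mul,
            ← Real.exp_add]
          apply ENNReal.ofReal_le_ofReal
          apply Real.exp_le_exp.mpr
          apply le_of_eq
          ring
  refine lt_of_le_of_lt (ENNReal.tsum_le_tsum hterm) ?_
  rw [ENNReal.tsum_mul_left, ENNReal.tsum_geometric]
  have hr : ENNReal.ofReal (Real.exp (l - lam)) < 1 := by
    rw [← ENNReal.ofReal_one]
    apply ENNReal.ofReal_lt_ofReal_iff_of_nonneg (Real.exp_nonneg _) |>.mpr
    rw [← Real.exp_zero]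
    exact Real.exp_lt_exp.mpr (by linarith)
  apply ENNReal.mul_lt_top
  · exact ENNReal.mul_lt_top hK.lt_top ENNReal.ofReal_lt_top
  · exact ENNReal.inv_lt_top.mpr (tsub_pos_of_lt hr)

lemma wiener_hopf (M : Ω → ℝ) (hM : Measurable M) (hM0 : ∀ ω, 0 ≤ M ω) (l : ℝ) (hl : 0 < l)
    (hint : Integrable (fun ω => Real.exp (l * M ω)) μ) :
    ∃ φ : ℂ → ℂ, ContinuousOn φ {ξ : ℂ | -l ≤ ξ.im}
      ∧ DifferentiableOn ℂ φ {ξ : ℂ | -l < ξ.im}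
      ∧ ∀ ξ : ℝ, φ (ξ : ℂ) = ∫ ω, Complex.exp (Complex.I * (ξ : ℂ) * (M ω : ℂ)) ∂μ := by
  set F : ℂ → Ω → ℂ := fun ξ ω => Complex.exp (Complex.I * ξ * (M ω : ℂ)) with hF
  have hnorm : ∀ (ξ : ℂ) (ω : Ω), ‖F ξ ω‖ = Real.exp (-ξ.im * M ω) := by
    intro ξ ω
    rw [hF]
    simp only
    rw [Complex.norm_exp]
    congr 1
    simp [Complex.mul_re, Complex.mul_im]
  have hFmeas : ∀ ξ : ℂ, AEStronglyMeasurable (F ξ) μ := by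
    intro ξ
    apply Measurable.aestronglyMeasurable
    exact Complex.measurable_exp.comp
      (measurable_const.mul (Complex.measurable_ofReal.comp hM))
  have hbound : ∀ ξ : ℂ, -l ≤ ξ.im → ∀ ω, ‖F ξ ω‖ ≤ Real.exp (l * M ω) := by
    intro ξ hξ ω
    rw [hnorm]
    exact Real.exp_le_exp.mpr (mul_le_mul_of_nonneg_right (by linarith) (hM0 ω))
  refine ⟨fun ξ => ∫ ω, F ξ ω ∂μ, ?_, ?_, fun ξ => rfl⟩
  · apply continuousOn_of_dominated (fun ξ _ => hFmeas ξ)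
      (fun ξ hξ => Filter.Eventually.of_forall (hbound ξ hξ)) hint
    apply Filter.Eventually.of_forall
    intro ω
    apply Continuous.continuousOn
    exact Complex.continuous_exp.comp
      ((continuous_const.mul continuous_id).mul continuous_const)
  · intro ξ₀ hξ₀
    simp only [Set.mem_setOf_eq] at hξ₀
    set ε : ℝ := (ξ₀.im + l) / 2 with hε
    have hεpos : 0 < ε := by rw [hε]; linarith
    set F' : ℂ → Ω → ℂ :=
      fun ξ ω => (Complex.I * (M ω : ℂ)) * Complex.exp (Complex.I * ξ * (M ω : ℂ)) with hF'
    have hball : ∀ ξ ∈ Metric.ball ξ₀ ε, -ξ.im ≤ l - ε := by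
      intro ξ hξ
      rw [Metric.mem_ball, Complex.dist_eq] at hξ
      have him : |ξ.im - ξ₀.im| < ε := by
        calc |ξ.im - ξ₀.im| = |(ξ - ξ₀).im| := by rw [Complex.sub_im]
          _ ≤ ‖ξ - ξ₀‖ := Complex.abs_im_le_norm _
          _ < ε := hξ
      have h2 := (abs_lt.mp him).1
      rw [hε] at *
      linarith
    have kbound : ∀ ω, ∀ ξ ∈ Metric.ball ξ₀ ε, ‖F' ξ ω‖ ≤ ε⁻¹ * Real.exp (l * M ω) := by
      intro ω ξ hξ
      have h1 : ‖F' ξ ω‖ = M ω * Real.exp (-ξ.im * M ω) := by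
        rw [hF']
        simp only
        rw [norm_mul, hnorm ξ ω]
        congr 1
        rw [norm_mul, Complex.norm_I, one_mul, Complex.norm_real,
          Real.norm_eq_abs, _root_.abs_of_nonneg (hM0 ω)]
      rw [h1]
      have h2 : Real.exp (-ξ.im * M ω) ≤ Real.exp ((l - ε) * M ω) :=
        Real.exp_le_exp.mpr (mul_le_mul_of_nonneg_right (hball ξ hξ) (hM0 ω))
      have h3 : ε * M ω ≤ Real.exp (ε * M ω) := by
        linarith [Real.add_one_le_exp (ε * M ω)]
      have h4 : ε * M ω * Real.exp ((l - ε) * M ω)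
          ≤ Real.exp (ε * M ω) * Real.exp ((l - ε) * M ω) :=
        mul_le_mul_of_nonneg_right h3 (Real.exp_nonneg _)
      rw [← Real.exp_add] at h4
      have h5 : ε * M ω + (l - ε) * M ω = l * M ω := by ring
      rw [h5] at h4
      calc M ω * Real.exp (-ξ.im * M ω) ≤ M ω * Real.exp ((l - ε) * M ω) :=
            mul_le_mul_of_nonneg_left h2 (hM0 ω)
        _ ≤ ε⁻¹ * Real.exp (l * M ω) := by
            rw [inv_mul_eq_div, le_div_iff₀ hεpos]
            nlinarith [h4]
    have hderiv : ∀ ω, ∀ ξ ∈ Metric.ball ξ₀ ε, HasDerivAt (fun ξ => F ξ ω) (F' ξ ω) ξ := by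
      intro ω ξ hξ
      have heq : (fun ξ : ℂ => Complex.I * ξ * (M ω : ℂ))
          = fun ξ : ℂ => (Complex.I * (M ω : ℂ)) * ξ := by funext z; ring
      have h0 : HasDerivAt (fun ξ : ℂ => Complex.I * ξ * (M ω : ℂ))
          (Complex.I * (M ω : ℂ)) ξ := by
        rw [heq]
        simpa using (hasDerivAt_id ξ).const_mul (Complex.I * (M ω : ℂ))
      have h1 := h0.cexp
      have : F' ξ ω = Complex.exp (Complex.I * ξ * (M ω : ℂ)) * (Complex.I * (M ω : ℂ)) := by
        rw [hF']; ring
      rw [hF, this]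
      exact h1
    have hξ₀mem : -ξ₀.im < l := by linarith
    have hint0 : Integrable (F ξ₀) μ :=
      hint.mono' (hFmeas ξ₀) (Filter.Eventually.of_forall (hbound ξ₀ (by linarith)))
    have hF'meas : AEStronglyMeasurable (F' ξ₀) μ := by
      apply Measurable.aestronglyMeasurable
      exact (measurable_const.mul (Complex.measurable_ofReal.comp hM)).mul
        (Complex.measurable_exp.comp
          (measurable_const.mul (Complex.measurable_ofReal.comp hM)))
    have hres := hasDerivAt_integral_of_dominated_loc_of_deriv_le (Metric.ball_mem_nhds ξ₀ hεpos)
      (Filter.Eventually.of_forall fun ξ => hFmeas ξ) hint0 hF'meas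
      (Filter.Eventually.of_forall fun ω => kbound ω) (hint.const_mul ε⁻¹)
      (Filter.Eventually.of_forall fun ω => hderiv ω)
    exact hres.2.differentiableAt.differentiableWithinAt

end WH

open WH

/-- For a Lévy process `X` with a two-sided exponential moment
(`E[e^{λX₁}] < ∞` for `λ ∈ (λ₋', λ₊')`, `λ₋' < 0 < λ₊'`) and `T ~ Exp(q)` independent of
`X`, the running supremum `X̄_T` has a finite exponential moment `E[e^{λ X̄_T}] < ∞` for
some sufficiently small `λ ∈ (0, λ₊')`, and the Wiener–Hopf factor
`φ_q⁺(ξ) = E[e^{iξ X̄_T}]` extends continuously to `{Im ξ ≥ −λ}` and analytically to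
`{Im ξ > −λ}`. -/
theorem stmt18 {Ω : Type*} [MeasurableSpace Ω] (μ : Measure Ω) [IsProbabilityMeasure μ]
    (X : ℝ → Ω → ℝ) (T : Ω → ℝ) (q lm' lp' : ℝ) (hq : 0 < q) (hlm : lm' < 0) (hlp : 0 < lp')
    -- X is a Lévy process started at 0:
    (hX0 : ∀ ω, X 0 ω = 0)
    (hXmeas : ∀ t, Measurable (X t))
    (hcadlag : ∀ ω t, ContinuousWithinAt (fun s => X s ω) (Set.Ici t) t)
    (hindep : ∀ (n : ℕ) (t : Fin (n + 1) → ℝ), Monotone t → (∀ i, 0 ≤ t i) →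
      iIndepFun
        (fun i : Fin n => fun ω => X (t i.succ) ω - X (t i.castSucc) ω) μ)
    (hstat : ∀ s t : ℝ, 0 ≤ s → s ≤ t →
      Measure.map (fun ω => X t ω - X s ω) μ = Measure.map (fun ω => X (t - s) ω) μ)
    -- two-sided exponential moment:
    (hmom : ∀ l : ℝ, l ∈ Set.Ioo lm' lp' → Integrable (fun ω => Real.exp (l * X 1 ω)) μ)
    -- T is exponentially distributed with rate q, independent of X:
    (hT0 : ∀ ω, 0 ≤ T ω)
    (hTlaw : ∀ s : ℝ, 0 ≤ s → μ {ω | s < T ω} = ENNReal.ofReal (Real.exp (-q * s)))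
    (hTindep : IndepFun T (fun ω => (fun t => X t ω : ℝ → ℝ)) μ)
    -- the running supremum at time `T` is well-defined and measurable:
    (hbdd : ∀ ω, BddAbove ((fun s => X s ω) '' Set.Icc 0 (T ω)))
    (hMmeas : Measurable (fun ω => sSup ((fun s => X s ω) '' Set.Icc 0 (T ω)))) :
    ∃ l : ℝ, l ∈ Set.Ioo 0 lp' ∧
      Integrable (fun ω =>
        Real.exp (l * sSup ((fun s => X s ω) '' Set.Icc 0 (T ω)))) μ ∧
      ∃ φ : ℂ → ℂ,
        ContinuousOn φ {ξ : ℂ | -l ≤ ξ.im} ∧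
        DifferentiableOn ℂ φ {ξ : ℂ | -l < ξ.im} ∧
        ∀ ξ : ℝ, φ (ξ : ℂ) = ∫ ω, Complex.exp (Complex.I * (ξ : ℂ) *
          (sSup ((fun s => X s ω) '' Set.Icc 0 (T ω)) : ℝ)) ∂μ := by
  classical
  set M : Ω → ℝ := fun ω => sSup ((fun s => X s ω) '' Set.Icc 0 (T ω)) with hMdef
  have hM0 : ∀ ω, 0 ≤ M ω := by
    intro ω
    have hmem : X 0 ω ∈ (fun s => X s ω) '' Set.Icc 0 (T ω) :=
      Set.mem_image_of_mem _ (Set.mem_Icc.mpr ⟨le_rfl, hT0 ω⟩)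
    have h := le_csSup (hbdd ω) hmem
    rw [hX0 ω] at h
    exact h
  set lam0 : ℝ := min lp' (-lm') / 2 with hlam0
  have hlam0pos : 0 < lam0 := by
    rw [hlam0]
    have : 0 < min lp' (-lm') := lt_min hlp (by linarith)
    linarith
  have hlam0lt : lam0 < lp' := by
    rw [hlam0]
    have h1 : min lp' (-lm') ≤ lp' := min_le_left _ _
    linarith
  have hlam0mem : lam0 ∈ Set.Ioo lm' lp' := ⟨by linarith, hlam0lt⟩
  set seq : ℕ → ℝ := fun n => lam0 / (n + 1) with hseqdef
  have hseqpos : ∀ n, 0 < seq n := fun n => by positivity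
  have hseqle : ∀ n, seq n ≤ lam0 := by
    intro n
    rw [hseqdef]
    apply div_le_self hlam0pos.le
    have : (0:ℝ) ≤ (n:ℝ) := Nat.cast_nonneg n
    linarith
  have hseq0 : Filter.Tendsto seq Filter.atTop (nhds 0) := by
    have h1 : Filter.Tendsto (fun n : ℕ => (n : ℝ) + 1) Filter.atTop Filter.atTop :=
      Filter.tendsto_atTop_add_const_right _ 1 tendsto_natCast_atTop_atTop
    exact h1.const_div_atTop lam0
  have hbint : ∫⁻ ω, (1 + ENNReal.ofReal (Real.exp (lam0 * X 1 ω))) ∂μ ≠ ∞ := by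
    rw [lintegral_add_left measurable_const]
    have h2 : ∫⁻ ω, ENNReal.ofReal (Real.exp (lam0 * X 1 ω)) ∂μ < ∞ :=
      (hasFiniteIntegral_iff_ofReal
        (Filter.Eventually.of_forall fun ω => Real.exp_nonneg _)).mp (hmom lam0 hlam0mem).2
    simp only [lintegral_one, measure_univ]
    exact ENNReal.add_ne_top.mpr ⟨by simp, h2.ne⟩
  have hb : ∀ n, (fun ω => g (seq n) (X 1 ω))
      ≤ᵐ[μ] fun ω => 1 + ENNReal.ofReal (Real.exp (lam0 * X 1 ω)) := by
    intro n
    apply Filter.Eventually.of_forall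
    intro ω
    have hre : Real.exp (seq n * X 1 ω) ≤ 1 + Real.exp (lam0 * X 1 ω) := by
      rcases le_or_gt 0 (X 1 ω) with hx | hx
      · have h1 : seq n * X 1 ω ≤ lam0 * X 1 ω :=
          mul_le_mul_of_nonneg_right (hseqle n) hx
        linarith [Real.exp_le_exp.mpr h1]
      · have h1 : seq n * X 1 ω ≤ 0 :=
          mul_nonpos_of_nonneg_of_nonpos (hseqpos n).le hx.le
        have h2 := Real.exp_le_exp.mpr h1
        rw [Real.exp_zero] at h2
        linarith [Real.exp_pos (lam0 * X 1 ω)]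
    calc g (seq n) (X 1 ω) = ENNReal.ofReal (Real.exp (seq n * X 1 ω)) := rfl
      _ ≤ ENNReal.ofReal (1 + Real.exp (lam0 * X 1 ω)) := ENNReal.ofReal_le_ofReal hre
      _ = 1 + ENNReal.ofReal (Real.exp (lam0 * X 1 ω)) := by
          rw [ENNReal.ofReal_add zero_le_one (Real.exp_nonneg _), ENNReal.ofReal_one]
  have hlim : ∀ᵐ ω ∂μ, Filter.Tendsto (fun n => g (seq n) (X 1 ω)) Filter.atTop
      (nhds ((fun _ : Ω => (1 : ℝ≥0∞)) ω)) := by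
    apply Filter.Eventually.of_forall
    intro ω
    have h1 : Filter.Tendsto (fun n => seq n * X 1 ω) Filter.atTop (nhds 0) := by
      simpa using hseq0.mul_const (X 1 ω)
    have h2 : Filter.Tendsto (fun n => Real.exp (seq n * X 1 ω)) Filter.atTop (nhds 1) := by
      have := (Real.continuous_exp.tendsto 0).comp h1
      simpa [Function.comp_def] using this
    have h3 := (ENNReal.continuous_ofReal.tendsto 1).comp h2
    simpa [g, Function.comp_def] using h3
  have htend : Filter.Tendsto (fun n => mfun μ X (seq n) 1) Filter.atTop (nhds 1) := by
    have h := tendsto_lintegral_of_dominated_convergence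
      (μ := μ) (F := fun n ω => g (seq n) (X 1 ω)) (f := fun _ => 1)
      (fun ω => 1 + ENNReal.ofReal (Real.exp (lam0 * X 1 ω)))
      (fun n => (g_meas (seq n)).comp (hXmeas 1)) hb hbint hlim
    simpa [mfun, lintegral_const, measure_univ] using h
  have hIoo : Set.Ioo (ENNReal.ofReal (Real.exp (-(q / 4))))
      (ENNReal.ofReal (Real.exp (q / 4))) ∈ nhds (1 : ℝ≥0∞) := by
    apply Ioo_mem_nhds
    · apply ENNReal.ofReal_lt_one.mpr
      rw [← Real.exp_zero]
      exact Real.exp_lt_exp.mpr (by linarith)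
    · apply ENNReal.one_lt_ofReal.mpr
      rw [← Real.exp_zero]
      exact Real.exp_lt_exp.mpr (by linarith)
  obtain ⟨n0, hn0⟩ := (htend.eventually_mem hIoo).exists
  set lam := seq n0 with hlamdef
  have hlampos : 0 < lam := hseqpos n0
  have hlamle : lam ≤ lam0 := hseqle n0
  set c := mfun μ X lam 1 with hcdef
  have hclb : ENNReal.ofReal (Real.exp (-(q / 4))) < c := hn0.1
  have hcub : c < ENNReal.ofReal (Real.exp (q / 4)) := hn0.2
  have hc0 : c ≠ 0 := (lt_trans (ENNReal.ofReal_pos.mpr (Real.exp_pos _)) hclb).ne'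
  have hctop : c ≠ ∞ := (lt_trans hcub ENNReal.ofReal_lt_top).ne
  have hmrat : ∀ u : ℚ, 0 ≤ u → mfun μ X lam (u : ℝ) = c ^ (u : ℝ) :=
    fun u hu => mfun_rat X hX0 hXmeas hindep hstat lam hc0 hctop hu
  have hmup : ∀ (m : ℕ) (u : ℚ), 0 ≤ u → u ≤ (m : ℚ) →
      mfun μ X lam (u : ℝ) ≤ ENNReal.ofReal (Real.exp (q * m / 4)) := by
    intro m u hu hum
    rw [hmrat u hu]
    have hcast : (0 : ℝ) ≤ (u : ℝ) := by exact_mod_cast hu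
    have hum' : (u : ℝ) ≤ (m : ℝ) := by exact_mod_cast hum
    calc c ^ (u : ℝ) ≤ (ENNReal.ofReal (Real.exp (q / 4))) ^ (u : ℝ) :=
          ENNReal.rpow_le_rpow hcub.le hcast
      _ = ENNReal.ofReal ((Real.exp (q / 4)) ^ (u : ℝ)) :=
          ENNReal.ofReal_rpow_of_pos (Real.exp_pos _)
      _ ≤ ENNReal.ofReal (Real.exp (q * m / 4)) := by
          apply ENNReal.ofReal_le_ofReal
          rw [← Real.exp_log (Real.rpow_pos_of_pos (Real.exp_pos _) _),
            Real.log_rpow (Real.exp_pos _), Real.log_exp]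
          apply Real.exp_le_exp.mpr
          nlinarith [hq.le]
  have hmlow : ∀ (m : ℕ) (u : ℚ), 0 ≤ u → u ≤ (m : ℚ) →
      ENNReal.ofReal (Real.exp (-(q * m / 4))) ≤ mfun μ X lam (u : ℝ) := by
    intro m u hu hum
    rw [hmrat u hu]
    have hcast : (0 : ℝ) ≤ (u : ℝ) := by exact_mod_cast hu
    have hum' : (u : ℝ) ≤ (m : ℝ) := by exact_mod_cast hum
    calc ENNReal.ofReal (Real.exp (-(q * m / 4)))
        ≤ ENNReal.ofReal ((Real.exp (-(q / 4))) ^ (u : ℝ)) := by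
          apply ENNReal.ofReal_le_ofReal
          rw [← Real.exp_log (Real.rpow_pos_of_pos (Real.exp_pos _) _),
            Real.log_rpow (Real.exp_pos _), Real.log_exp]
          apply Real.exp_le_exp.mpr
          nlinarith [hq.le]
      _ = (ENNReal.ofReal (Real.exp (-(q / 4)))) ^ (u : ℝ) :=
          (ENNReal.ofReal_rpow_of_pos (Real.exp_pos _)).symm
      _ ≤ c ^ (u : ℝ) := ENNReal.rpow_le_rpow hclb.le hcast
  have hpath : ∀ (m : ℕ) (α : ℝ),
      μ {ω | ∃ u : ℚ, 0 ≤ u ∧ u ≤ (m : ℚ) ∧ α < X (u : ℝ) ω}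
        ≤ ENNReal.ofReal (Real.exp (q * m / 2) * Real.exp (-(lam * α))) := by
    intro m α
    have h := rationalSup_bound X hX0 hXmeas hindep hstat lam hlampos m
      (Real.exp (-(q * m / 4))) (Real.exp (q * m / 4)) (Real.exp_pos _)
      (fun u hu hum => hmlow m u hu hum) (fun u hu hum => hmup m u hu hum) α
    refine le_trans h (ENNReal.ofReal_le_ofReal ?_)
    apply mul_le_mul_of_nonneg_right _ (Real.exp_nonneg _)
    rw [← Real.exp_sub]
    apply le_of_eq
    congr 1
    ring
  set K : ℝ≥0∞ := ENNReal.ofReal (Real.exp (3 * q / 2))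
      * (1 - ENNReal.ofReal (Real.exp (-(q / 2))))⁻¹ with hKdef
  have htail : ∀ α : ℝ, μ {ω | α < M ω} ≤ K * ENNReal.ofReal (Real.exp (-(lam * α))) :=
    fun α => tail_bound X T hcadlag hT0 hTindep q lam hq hlampos hTlaw hpath α
  have hKne : K ≠ ∞ := by
    apply ENNReal.mul_ne_top ENNReal.ofReal_ne_top
    have hr : ENNReal.ofReal (Real.exp (-(q / 2))) < 1 := by
      apply ENNReal.ofReal_lt_one.mpr
      rw [← Real.exp_zero]
      exact Real.exp_lt_exp.mpr (by linarith)
    exact ENNReal.inv_ne_top.mpr (tsub_pos_of_lt hr).ne'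
  have hInt : Integrable (fun ω => Real.exp (lam / 2 * M ω)) μ :=
    integrable_of_tail M hMmeas hM0 lam (lam / 2) (by linarith) (by linarith) K hKne htail
  obtain ⟨φ, hφc, hφd, hφeq⟩ := wiener_hopf M hMmeas hM0 (lam / 2) (by linarith) hInt
  exact ⟨lam / 2, ⟨by linarith, by linarith⟩, hInt, φ, hφc, hφd, hφeq⟩
end
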